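/- Let H = ⊕_{n≥0} H_n be a graded connected Hopf algebra (H_0 = k). If f ∈ End(H_p) and g ∈ End(H_q) (extended by zero to H), then the smash product f # g lies in ⊕_{n=max(p,q)}^{p+q} End(H_n); that is, the component of f#g in End(H_n) is zero unless max(p,q) ≤ n ≤ p+q. -/
import Mathlib


open TensorProduct

/-- The cyclic map `(x ⊗ y) ⊗ z ↦ y ⊗ (z ⊗ x)`. -/
noncomputable def cyclicMap (k H : Type*) [CommSemiring k] [AddCommMonoid H] [Module k H] :
    (H ⊗[k] H) ⊗[k] H →ₗ[k] H ⊗[k] (H ⊗[k] H) :=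
  (LinearMap.lTensor H (TensorProduct.comm k H H).toLinearMap) ∘ₗ
    (TensorProduct.assoc k H H H).toLinearMap ∘ₗ
      (LinearMap.rTensor H (TensorProduct.comm k H H).toLinearMap)

/-- The smash product of linear endomorphisms, relative to a product `m` and coproduct `Δ`:
`f # g = m ∘ (1⊗g) ∘ (1⊗m) ∘ cyclic ∘ (Δ⊗1) ∘ (f⊗1) ∘ Δ`. -/
noncomputable def smashOf {k H : Type*} [CommSemiring k] [AddCommMonoid H] [Module k H]
    (m : H ⊗[k] H →ₗ[k] H) (Δ : H →ₗ[k] H ⊗[k] H) (f g : H →ₗ[k] H) : H →ₗ[k] H :=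
  m ∘ₗ (LinearMap.lTensor H g) ∘ₗ (LinearMap.lTensor H m) ∘ₗ cyclicMap k H ∘ₗ
    (LinearMap.rTensor H (Δ ∘ₗ f)) ∘ₗ Δ

/-- The smash product of endomorphisms of a Hopf algebra. -/
noncomputable def smashEnd (k H : Type*) [CommSemiring k] [Semiring H] [HopfAlgebra k H]
    (f g : H →ₗ[k] H) : H →ₗ[k] H :=
  smashOf (LinearMap.mul' k H) (Coalgebra.comul (R := k) (A := H)) f g

/-- Let `H = ⊕ₙ Hₙ` be a graded connected Hopf algebra (graded as an algebra,
with graded coproduct and `H₀ = k·1`).  If `f` is concentrated in degree `p` and `g` in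
degree `q` (both extended by zero), then `f # g` is degree-preserving and its component in
`End(Hₙ)` vanishes unless `max(p,q) ≤ n ≤ p+q`. -/
theorem smash_degree_bounds (k H : Type*) [Field k] [Semiring H] [HopfAlgebra k H]
    (ℋ : ℕ → Submodule k H) [GradedAlgebra ℋ]
    (hconn : ℋ 0 = (1 : Submodule k H))
    (hcomul : ∀ (n : ℕ), ∀ x ∈ ℋ n,
      Coalgebra.comul (R := k) x ∈
        ⨆ pq : {pq : ℕ × ℕ // pq.1 + pq.2 = n},
          LinearMap.range (TensorProduct.mapIncl (ℋ pq.1.1) (ℋ pq.1.2)))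
    (p q : ℕ) (f g : H →ₗ[k] H)
    (hfp : ∀ x ∈ ℋ p, f x ∈ ℋ p) (hf0 : ∀ n, n ≠ p → ∀ x ∈ ℋ n, f x = 0)
    (hgq : ∀ x ∈ ℋ q, g x ∈ ℋ q) (hg0 : ∀ n, n ≠ q → ∀ x ∈ ℋ n, g x = 0) :
    (∀ (n : ℕ), ∀ x ∈ ℋ n, smashEnd k H f g x ∈ ℋ n) ∧
      (∀ (n : ℕ), n < max p q ∨ p + q < n → ∀ x ∈ ℋ n, smashEnd k H f g x = 0) := by

  classical
  have key : ∀ (n : ℕ), ∀ x ∈ ℋ n, smashEnd k H f g x ∈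
      (if n < max p q ∨ p + q < n then (⊥ : Submodule k H) else ℋ n) := by
    intro n x hx
    set S : Submodule k H := if n < max p q ∨ p + q < n then ⊥ else ℋ n with hS
    set m := LinearMap.mul' k H with hm
    set Δ : H →ₗ[k] H ⊗[k] H := Coalgebra.comul (R := k) (A := H) with hΔ
    set L : H ⊗[k] H →ₗ[k] H :=
      m ∘ₗ (LinearMap.lTensor H g) ∘ₗ (LinearMap.lTensor H m) ∘ₗ cyclicMap k H ∘ₗ
        (LinearMap.rTensor H (Δ ∘ₗ f)) with hLdef
    have hL : smashEnd k H f g x = L (Δ x) := rfl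
    rw [hL]
    have hsup : (⨆ pq : {pq : ℕ × ℕ // pq.1 + pq.2 = n},
        LinearMap.range (TensorProduct.mapIncl (ℋ pq.1.1) (ℋ pq.1.2))) ≤
        Submodule.comap L S := by
      apply iSup_le
      rintro ⟨⟨a, b⟩, hab⟩
      rintro u hu
      obtain ⟨v, rfl⟩ := hu
      simp only [Submodule.mem_comap]
      induction v using TensorProduct.induction_on with
      | zero => simpa using S.zero_mem
      | add v₁ v₂ hv₁ hv₂ => rw [map_add, map_add]; exact S.add_mem hv₁ hv₂
      | tmul x₁ x₂ =>
        simp only [TensorProduct.mapIncl, TensorProduct.map_tmul, Submodule.coe_subtype]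
        by_cases ha : a = p
        · subst ha
          have hfx : f ↑x₁ ∈ ℋ a := hfp _ x₁.2
          set L₂ : H ⊗[k] H →ₗ[k] H :=
            m ∘ₗ (LinearMap.lTensor H g) ∘ₗ (LinearMap.lTensor H m) ∘ₗ cyclicMap k H ∘ₗ
              ((TensorProduct.mk k (H ⊗[k] H) H).flip ↑x₂) with hL2def
          have hL2 : L ((↑x₁ : H) ⊗ₜ[k] (↑x₂ : H)) = L₂ (Δ (f ↑x₁)) := by
            simp only [hLdef, hL2def, LinearMap.comp_apply, LinearMap.rTensor_tmul,
              LinearMap.flip_apply, TensorProduct.mk_apply]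
          rw [hL2]
          have h2 := hcomul a _ hfx
          have hsup2 : (⨆ cd : {cd : ℕ × ℕ // cd.1 + cd.2 = a},
              LinearMap.range (TensorProduct.mapIncl (ℋ cd.1.1) (ℋ cd.1.2))) ≤
              Submodule.comap L₂ S := by
            apply iSup_le
            rintro ⟨⟨c, d⟩, hcd⟩
            rintro w hw
            obtain ⟨v, rfl⟩ := hw
            simp only [Submodule.mem_comap]
            induction v using TensorProduct.induction_on with
            | zero => simpa using S.zero_mem
            | add w₁ w₂ hw₁ hw₂ => rw [map_add, map_add]; exact S.add_mem hw₁ hw₂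
            | tmul y₁ y₂ =>
              simp only [TensorProduct.mapIncl, TensorProduct.map_tmul, Submodule.coe_subtype]
              have hcomp : L₂ ((↑y₁ : H) ⊗ₜ[k] (↑y₂ : H)) = ↑y₂ * g (↑x₂ * ↑y₁) := by
                simp [hL2def, hm, cyclicMap, LinearMap.comp_apply, LinearMap.flip_apply,
                  TensorProduct.mk_apply, LinearMap.rTensor_tmul, LinearMap.lTensor_tmul,
                  TensorProduct.comm_tmul, TensorProduct.assoc_tmul, LinearMap.mul'_apply]
              rw [hcomp]
              have hmul1 : (↑x₂ : H) * ↑y₁ ∈ ℋ (b + c) :=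
                SetLike.mul_mem_graded x₂.2 y₁.2
              by_cases hbc : b + c = q
              · have hgmem : g (↑x₂ * ↑y₁) ∈ ℋ q := hgq _ (hbc ▸ hmul1)
                have hmul2 : (↑y₂ : H) * g (↑x₂ * ↑y₁) ∈ ℋ (d + q) :=
                  SetLike.mul_mem_graded y₂.2 hgmem
                have hdq : d + q = n := by omega
                have hgood : ¬ (n < max a q ∨ a + q < n) := by omega
                rw [hS, if_neg hgood]
                exact hdq ▸ hmul2
              · have hz : g (↑x₂ * ↑y₁) = 0 := hg0 _ hbc _ hmul1
                rw [hz, mul_zero]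
                exact S.zero_mem
          exact hsup2 h2
        · have hfz : f ↑x₁ = 0 := hf0 a ha _ x₁.2
          have hz : L ((↑x₁ : H) ⊗ₜ[k] (↑x₂ : H)) = 0 := by
            simp only [hLdef, LinearMap.comp_apply, LinearMap.rTensor_tmul,
              LinearMap.comp_apply, hfz, map_zero, TensorProduct.zero_tmul]
          rw [hz]; exact S.zero_mem
    exact hsup (hcomul n x hx)
  constructor
  · intro n x hx
    have h := key n x hx
    by_cases hn : n < max p q ∨ p + q < n
    · rw [if_pos hn, Submodule.mem_bot] at h
      rw [h]; exact (ℋ n).zero_mem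
    · rwa [if_neg hn] at h
  · intro n hn x hx
    have h := key n x hx
    rw [if_pos hn, Submodule.mem_bot] at h
    exact h
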